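/- Fix 0 < ϑ < 1, let r = √((√5 − 1)/2), and define f(d) = √ϑ/(1 − r²)^{d/4} and g(d) = (r/√(1 − r²))^d · (√(1 + 2ϑ(1 − r²)^{d/2}/r^{2d}) − 1) for positive integers d. Then for every positive integer d, f(d)/g(d) = (√(1 + 2ϑ) + 1)/(2√ϑ), and this constant is greater than 1. -/

import Mathlib

open Filter

/-- **Corollary, case 2.** For `r = √((√5-1)/2)` and `0 < ϑ < 1`, with
`f(d) = √ϑ/(1-r²)^{d/4}` and
`g(d) = (r/√(1-r²))^d (√(1 + 2ϑ(1-r²)^{d/2}/r^{2d}) - 1)`, one has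
`f(d)/g(d) = (√(1+2ϑ)+1)/(2√ϑ)` for every positive integer `d`, and this
constant is greater than `1`. -/
theorem bounds_quotient_eq_critical_r
    (ϑ : ℝ) (hϑ0 : 0 < ϑ) (hϑ1 : ϑ < 1)
    (r : ℝ) (hr : r = Real.sqrt ((Real.sqrt 5 - 1) / 2)) :
    (∀ d : ℕ, 0 < d →
      Real.sqrt ϑ / (1 - r ^ 2) ^ ((d : ℝ) / 4) /
          ((r / Real.sqrt (1 - r ^ 2)) ^ d *
            (Real.sqrt (1 + 2 * ϑ * (1 - r ^ 2) ^ ((d : ℝ) / 2) / r ^ (2 * d)) - 1)) =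
        (Real.sqrt (1 + 2 * ϑ) + 1) / (2 * Real.sqrt ϑ)) ∧
    1 < (Real.sqrt (1 + 2 * ϑ) + 1) / (2 * Real.sqrt ϑ) := by
  have h5 : Real.sqrt 5 ^ 2 = 5 := Real.sq_sqrt (by norm_num)
  have h5' : 1 < Real.sqrt 5 := by nlinarith [Real.sqrt_nonneg 5]
  have hpos : 0 < (Real.sqrt 5 - 1) / 2 := by linarith
  have hr0 : 0 < r := hr ▸ Real.sqrt_pos.mpr hpos
  have hr2 : r ^ 2 = (Real.sqrt 5 - 1) / 2 := by rw [hr]; exact Real.sq_sqrt hpos.le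
  have h14 : 1 - r ^ 2 = r ^ 4 := by nlinarith [hr2]
  have hsq : Real.sqrt (1 - r ^ 2) = r ^ 2 := by
    rw [h14, show r ^ 4 = (r ^ 2) ^ 2 by ring, Real.sqrt_sq (by positivity)]
  have hϑs : 0 < Real.sqrt ϑ := Real.sqrt_pos.mpr hϑ0
  have hϑsq : Real.sqrt ϑ ^ 2 = ϑ := Real.sq_sqrt hϑ0.le
  have hAsq : Real.sqrt (1 + 2 * ϑ) ^ 2 = 1 + 2 * ϑ := Real.sq_sqrt (by linarith)
  have hA1 : 1 < Real.sqrt (1 + 2 * ϑ) :=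
    (Real.lt_sqrt (by norm_num)).mpr (by nlinarith)
  constructor
  · intro d hd
    have e4 : (1 - r ^ 2) ^ ((d : ℝ) / 4) = r ^ d := by
      rw [h14, show (r : ℝ) ^ 4 = r ^ ((4 : ℕ) : ℝ) from (Real.rpow_natCast r 4).symm,
        ← Real.rpow_mul hr0.le, show ((4 : ℕ) : ℝ) * ((d : ℝ) / 4) = (d : ℝ) by push_cast; ring,
        Real.rpow_natCast]
    have e2 : (1 - r ^ 2) ^ ((d : ℝ) / 2) = r ^ (2 * d) := by
      rw [h14, show (r : ℝ) ^ 4 = r ^ ((4 : ℕ) : ℝ) from (Real.rpow_natCast r 4).symm,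
        ← Real.rpow_mul hr0.le,
        show ((4 : ℕ) : ℝ) * ((d : ℝ) / 2) = ((2 * d : ℕ) : ℝ) by push_cast; ring,
        Real.rpow_natCast]
    have hrd : r ^ (2 * d) ≠ 0 := pow_ne_zero _ hr0.ne'
    have earg : 1 + 2 * ϑ * (1 - r ^ 2) ^ ((d : ℝ) / 2) / r ^ (2 * d) = 1 + 2 * ϑ := by
      rw [e2, mul_div_assoc, div_self hrd, mul_one]
    rw [e4, hsq, earg]
    have hrd' : r ^ d ≠ 0 := pow_ne_zero _ hr0.ne'
    have hA1' : Real.sqrt (1 + 2 * ϑ) - 1 ≠ 0 := by linarith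
    have hrr : (r / r ^ 2) ^ d = (r ^ d)⁻¹ := by
      rw [show r / r ^ 2 = r⁻¹ by field_simp, inv_pow]
    rw [hrr]
    field_simp
    nlinarith [hϑsq, hAsq]
  · rw [lt_div_iff₀ (by positivity)]
    have : Real.sqrt ϑ < 1 := by
      rw [show (1 : ℝ) = Real.sqrt 1 by simp]
      exact Real.sqrt_lt_sqrt hϑ0.le hϑ1
    nlinarith
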